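/- arXiv:2211.14567 — 9 statements merged into one kernel-verified Lean document; each statement's English description precedes it below -/
import Mathlib

section
/- For any measurable function h from X to the reals and any coherent upper probability P-bar on a finite set X, the set function Omega_h defined by Omega_h(E) = P-bar({x : h(x) <= sup_{e in E} h(e)}) is consonant, i.e., there exists a contour function omega_h with sup over X of omega_h equal to 1 such that Omega_h(E) = sup_{x in E} omega_h(x). -/
open MeasureTheory
open scoped ENNReal

/-- For any measurable `h : X → ℝ` and any coherent upper probability (upper envelope of a
nonempty set `C` of probability measures) on a finite set `X`, the set function
`Ω_h(E) = P̄({x : h x ≤ sup_{e ∈ E} h e})` is consonant: there is a contour `ω` with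
`⨆ x, ω x = 1` such that `Ω_h(E) = ⨆ x ∈ E, ω x`. -/
theorem stmt0 {X : Type*} [Fintype X] [Nonempty X] [MeasurableSpace X]
    [MeasurableSingletonClass X]
    (C : Set (Measure X)) (hC : C.Nonempty)
    (hprob : ∀ P ∈ C, IsProbabilityMeasure P)
    (h : X → ℝ) (hmeas : Measurable h) :
    ∃ ω : X → ℝ≥0∞, (⨆ x, ω x) = 1 ∧
      ∀ E : Set X,
        (⨆ P ∈ C, P {x | (h x : EReal) ≤ ⨆ e ∈ E, (h e : EReal)}) = ⨆ x ∈ E, ω x := by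
  set ω : X → ℝ≥0∞ := fun x => ⨆ P ∈ C, P {x' | h x' ≤ h x} with hω
  have hωle : ∀ x, ω x ≤ 1 := by
    intro x
    refine iSup₂_le fun P hP => ?_
    haveI := hprob P hP
    exact prob_le_one
  have hωmono : ∀ x y, h x ≤ h y → ω x ≤ ω y := by
    intro x y hxy
    refine iSup₂_le fun P hP => le_trans ?_ (le_iSup₂ (f := fun P _ => P {x' | h x' ≤ h y}) P hP)
    exact measure_mono fun z hz => le_trans hz hxy
  obtain ⟨xmax, hxmax⟩ := Finite.exists_max h
  have hone : ω xmax = 1 := by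
    have huniv : {x' | h x' ≤ h xmax} = Set.univ := by
      ext z; simp [hxmax z]
    rw [hω]
    simp only [huniv]
    obtain ⟨P0, hP0⟩ := hC
    refine le_antisymm (iSup₂_le fun P hP => by haveI := hprob P hP; simp) ?_
    refine le_trans ?_ (le_iSup₂ (f := fun P (_ : P ∈ C) => P Set.univ) P0 hP0)
    haveI := hprob P0 hP0
    simp
  refine ⟨ω, le_antisymm (iSup_le hωle) (le_trans hone.ge (le_iSup ω xmax)), fun E => ?_⟩
  rcases E.eq_empty_or_nonempty with rfl | hE
  · have : {x | (h x : EReal) ≤ ⨆ e ∈ (∅ : Set X), (h e : EReal)} = ∅ := by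
      ext z
      simp only [Set.mem_empty_iff_false, iSup_false, iSup_bot, Set.mem_setOf_eq, le_bot_iff]
      simpa using EReal.coe_ne_bot (h z)
    simp [this]
  · obtain ⟨e0, he0, hmax⟩ := Set.exists_max_image E h E.toFinite hE
    have hsup : (⨆ e ∈ E, (h e : EReal)) = (h e0 : EReal) := by
      refine le_antisymm (iSup₂_le fun e he => EReal.coe_le_coe_iff.2 (hmax e he)) ?_
      exact le_iSup₂ (f := fun e (_ : e ∈ E) => (h e : EReal)) e0 he0
    have hset : {x | (h x : EReal) ≤ ⨆ e ∈ E, (h e : EReal)} = {x' | h x' ≤ h e0} := by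
      ext z; simp [hsup, EReal.coe_le_coe_iff]
    rw [hset]
    refine le_antisymm ?_ ?_
    · exact le_trans le_rfl (le_trans le_rfl
        (le_trans (le_refl (ω e0)) (le_iSup₂ (f := fun x (_ : x ∈ E) => ω x) e0 he0)))
    · exact iSup₂_le fun x hx => hωmono x e0 (hmax x hx)
end

section
/- For any probability measure P in the credal set of a coherent upper probability P-bar on a finite set X, and for the contour omega_h(x) = P-bar({x' : h(x') <= h(x)}), it holds that P({x : omega_h(x) <= alpha}) <= alpha for all alpha in [0,1]. -/
open MeasureTheory
open scoped ENNReal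

/-- For any `P` in the credal set `C` of a coherent upper probability `P̄ = ⨆ Q ∈ C, Q ·` on a
finite set `X`, with contour `ω_h x = P̄ {x' | h x' ≤ h x}`, one has
`P {x | ω_h x ≤ α} ≤ α` for all `α ∈ [0,1]`. -/
theorem stmt2 {X : Type*} [Fintype X] [MeasurableSpace X] [MeasurableSingletonClass X]
    (C : Set (Measure X)) (hC : C.Nonempty)
    (hprob : ∀ P ∈ C, IsProbabilityMeasure P)
    (h : X → ℝ)
    (P : Measure X) (hP : P ∈ C) :
    ∀ α : ℝ≥0∞, α ≤ 1 →
      P {x | (⨆ Q ∈ C, Q {x' | h x' ≤ h x}) ≤ α} ≤ α := by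
  intro α hα
  set A : Set X := {x | (⨆ Q ∈ C, Q {x' | h x' ≤ h x}) ≤ α} with hA
  rcases A.eq_empty_or_nonempty with hAe | hAne
  · simp [hAe]
  · obtain ⟨x₀, hx₀A, hx₀max⟩ := Set.exists_max_image A h A.toFinite hAne
    have h1 : A ⊆ {x' | h x' ≤ h x₀} := fun x hx => hx₀max x hx
    calc P A ≤ P {x' | h x' ≤ h x₀} := measure_mono h1
      _ ≤ ⨆ Q ∈ C, Q {x' | h x' ≤ h x₀} := le_biSup (fun Q : Measure X => Q {x' | h x' ≤ h x₀}) hP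
      _ ≤ α := hx₀A
end

section
/- Credal set characterization of a possibility measure: a probability measure P on a finite set X belongs to the credal set of the possibility measure with contour pi (i.e., P(E) <= sup_{x in E} pi(x) for all E) if and only if P({x : pi(x) <= alpha}) <= alpha for all alpha in [0,1]. -/
open MeasureTheory
open scoped ENNReal

/-- Credal-set characterization of a possibility measure: a probability measure `P` on a finite
set `X` satisfies `P E ≤ ⨆ x ∈ E, π x` for all `E` iff `P {x | π x ≤ α} ≤ α` for all
`α ∈ [0,1]`, where `π` is a possibility contour with `⨆ x, π x = 1`. -/
theorem stmt4 {X : Type*} [Fintype X] [Nonempty X] [MeasurableSpace X]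
    [MeasurableSingletonClass X]
    (P : Measure X) [IsProbabilityMeasure P]
    (pi : X → ℝ≥0∞) (hpi : (⨆ x, pi x) = 1) :
    (∀ E : Set X, P E ≤ ⨆ x ∈ E, pi x) ↔
      (∀ α : ℝ≥0∞, α ≤ 1 → P {x | pi x ≤ α} ≤ α) := by
  constructor
  · intro h α _
    exact (h _).trans (iSup₂_le fun x hx => hx)
  · intro h E
    have hs : (⨆ x ∈ E, pi x) ≤ 1 := by
      rw [← hpi]; exact iSup₂_le fun x _ => le_iSup _ x
    calc P E ≤ P {x | pi x ≤ ⨆ x ∈ E, pi x} :=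
          measure_mono fun x hx => le_iSup₂ (f := fun x _ => pi x) x hx
      _ ≤ ⨆ x ∈ E, pi x := h _ hs
end

section
/- Minimality among order-compatible consonant outer approximations: fix h : X -> R and a coherent upper probability P-bar on finite X. If omega : X -> [0,1] is any possibility contour (max = 1) whose induced possibility measure outer-approximates P-bar and which has the same plausibility order as h (h(x) > h(x') implies omega(x) > omega(x')), then omega_h(x) = P-bar({x' : h(x') <= h(x)}) satisfies omega_h(x) <= omega(x) pointwise. -/
open MeasureTheory
open scoped ENNReal

/-- Minimality among order-compatible consonant outer approximations: if `ω` is a possibility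
contour (max 1) whose induced possibility measure outer-approximates the coherent upper
probability `P̄ = ⨆ P ∈ C, P ·` and which has the same plausibility order as `h`
(`h x ≤ h x' → ω x ≤ ω x'`), then `ω_h x = P̄ {x' | h x' ≤ h x} ≤ ω x` pointwise. -/
theorem stmt6 {X : Type*} [Fintype X] [MeasurableSpace X] [MeasurableSingletonClass X]
    (C : Set (Measure X)) (hC : C.Nonempty)
    (hprob : ∀ P ∈ C, IsProbabilityMeasure P)
    (h : X → ℝ) (ω : X → ℝ≥0∞) (hmax : (⨆ x, ω x) = 1)
    (houter : ∀ E : Set X, (⨆ P ∈ C, P E) ≤ ⨆ x ∈ E, ω x)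
    (horder : ∀ x x' : X, h x ≤ h x' → ω x ≤ ω x') :
    ∀ x : X, (⨆ P ∈ C, P {x' | h x' ≤ h x}) ≤ ω x := by
  intro x
  refine (houter _).trans ?_
  exact iSup₂_le fun x' hx' => horder x' x hx'
end

section
/- Strong validity of the focused IM: for the contour pi_y(theta) = P-bar_{Y,Theta}({(y',theta') : eta(y',theta') <= eta(y,theta)}), every probability measure P in the credal set of P-bar_{Y,Theta} satisfies P({(y,theta) : pi_y(theta) <= alpha}) <= alpha for all alpha in [0,1]. -/
open MeasureTheory
open scoped ENNReal

/-- Strong validity of the focused IM: with contour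
`π_y(θ) = P̄_{Y,Θ} {(y',θ') | η (y',θ') ≤ η (y,θ)}`, every probability measure `P` in the
credal set of `P̄_{Y,Θ}` satisfies `P {(y,θ) | π_y(θ) ≤ α} ≤ α` for all `α ∈ [0,1]`. -/
theorem stmt8 {Y T : Type*} [Fintype Y] [Fintype T]
    [MeasurableSpace Y] [MeasurableSpace T]
    [MeasurableSingletonClass Y] [MeasurableSingletonClass T]
    (C : Set (Measure (Y × T))) (hC : C.Nonempty)
    (hprob : ∀ P ∈ C, IsProbabilityMeasure P)
    (η : Y × T → ℝ)
    (P : Measure (Y × T)) (hP : P ∈ C) :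
    ∀ α : ℝ≥0∞, α ≤ 1 →
      P {p : Y × T | (⨆ Q ∈ C, Q {p' | η p' ≤ η p}) ≤ α} ≤ α := by
  intro α hα
  set S' : Set (Y × T) := {p | P {p' | η p' ≤ η p} ≤ α} with hS'
  have hsub : {p : Y × T | (⨆ Q ∈ C, Q {p' | η p' ≤ η p}) ≤ α} ⊆ S' := by
    intro p hp
    exact le_trans (le_biSup (fun Q => Q {p' | η p' ≤ η p}) hP) hp
  refine le_trans (measure_mono hsub) ?_
  rcases S'.eq_empty_or_nonempty with h | hne
  · simp [h]
  · obtain ⟨a, haS, hmax⟩ := Set.Finite.exists_maximalFor η S' S'.toFinite hne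
    have hsub2 : S' ⊆ {p' | η p' ≤ η a} := by
      intro b hb
      by_contra hlt
      simp only [Set.mem_setOf_eq, not_le] at hlt
      exact absurd (hmax hb hlt.le) (not_le.mpr hlt)
    exact le_trans (measure_mono hsub2) haS
end

section
/- Half-coherence of the IM updating rule: with pi_y(theta) defined as the outer consonant approximation contour of the joint upper probability P-bar_{Y,Theta}, the induced possibility measures Pi-bar_y(A) = sup_{theta in A} pi_y(theta) satisfy sup_{y in Y} Pi-bar_y(A) >= P-bar_Theta(A) for every subset A of T, where P-bar_Theta(A) = P-bar_{Y,Theta}(Y x A) is the marginal prior upper probability. -/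
open MeasureTheory
open scoped ENNReal

/-- Half-coherence of the IM updating rule: with
`π_y(θ) = P̄_{Y,Θ} {(y',θ') | η(y',θ') ≤ η(y,θ)}` and `Π̄_y(A) = ⨆ θ ∈ A, π_y(θ)`, one has
`⨆ y, Π̄_y(A) ≥ P̄_Θ(A) = P̄_{Y,Θ}(Y × A)` for every `A ⊆ T`. -/
theorem stmt9 {Y T : Type*} [Fintype Y] [Fintype T]
    [MeasurableSpace Y] [MeasurableSpace T]
    [MeasurableSingletonClass Y] [MeasurableSingletonClass T]
    (C : Set (Measure (Y × T))) (hC : C.Nonempty)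
    (hprob : ∀ P ∈ C, IsProbabilityMeasure P)
    (η : Y × T → ℝ) :
    ∀ A : Set T,
      (⨆ P ∈ C, P (Set.univ ×ˢ A)) ≤
        ⨆ y : Y, ⨆ θ ∈ A, (⨆ P ∈ C, P {p : Y × T | η p ≤ η (y, θ)}) := by
  intro A
  -- Y is nonempty since a probability measure exists
  obtain ⟨P0, hP0⟩ := hC
  have hY : Nonempty Y := by
    by_contra h
    have hempty : (Set.univ : Set (Y × T)) = ∅ := by
      ext p; exact absurd ⟨p.1⟩ h
    have := (hprob P0 hP0).measure_univ
    rw [hempty] at this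
    simp at this
  rcases A.eq_empty_or_nonempty with rfl | hA
  · simp
  · -- pick a maximizer of η on univ ×ˢ A
    have hS : (Set.univ ×ˢ A : Set (Y × T)).Nonempty := by
      obtain ⟨θ, hθ⟩ := hA
      exact ⟨(hY.some, θ), ⟨trivial, hθ⟩⟩
    obtain ⟨m, hmS, hmax⟩ := Set.exists_max_image (Set.univ ×ˢ A) η
      (Set.toFinite _) hS
    have hsub : (Set.univ ×ˢ A : Set (Y × T)) ⊆ {p : Y × T | η p ≤ η (m.1, m.2)} := by
      intro p hp
      simpa using hmax p hp
    refine iSup₂_le fun P hP => ?_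
    have h1 : P (Set.univ ×ˢ A) ≤ P {p : Y × T | η p ≤ η (m.1, m.2)} :=
      measure_mono hsub
    refine h1.trans ?_
    have h2 : P {p : Y × T | η p ≤ η (m.1, m.2)}
        ≤ ⨆ P ∈ C, P {p : Y × T | η p ≤ η (m.1, m.2)} :=
      le_iSup₂ (f := fun (P : Measure (Y × T)) (_ : P ∈ C) =>
        P {p : Y × T | η p ≤ η (m.1, m.2)}) P hP
    refine h2.trans ?_
    have hmA : m.2 ∈ A := hmS.2
    calc (⨆ P ∈ C, P {p : Y × T | η p ≤ η (m.1, m.2)})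
        ≤ ⨆ θ ∈ A, (⨆ P ∈ C, P {p : Y × T | η p ≤ η (m.1, θ)}) :=
          le_iSup₂ (f := fun θ (_ : θ ∈ A) =>
            ⨆ P ∈ C, P {p : Y × T | η p ≤ η (m.1, θ)}) m.2 hmA
      _ ≤ ⨆ y : Y, ⨆ θ ∈ A, (⨆ P ∈ C, P {p : Y × T | η p ≤ η (y, θ)}) :=
          le_iSup (fun y => ⨆ θ ∈ A, (⨆ P ∈ C, P {p : Y × T | η p ≤ η (y, θ)})) m.1
end

section
/- Testing error-rate control from strong validity: under strong validity of the contour pi, for any fixed hypothesis A subset of T and alpha in [0,1], the joint upper probability of the event {(y,theta) : sup_{t in A} pi_y(t) <= alpha and theta in A} is at most alpha. -/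
open MeasureTheory
open scoped ENNReal

/-- Testing error-rate control from strong validity: for any fixed hypothesis `A ⊆ T` and
`α ∈ [0,1]`, the joint upper probability of the event
`{(y,θ) | ⨆ t ∈ A, π(y,t) ≤ α and θ ∈ A}` is at most `α`. -/
theorem stmt11 {Y T : Type*} [Fintype Y] [Fintype T]
    [MeasurableSpace Y] [MeasurableSpace T]
    (C : Set (Measure (Y × T))) (hC : C.Nonempty)
    (hprob : ∀ P ∈ C, IsProbabilityMeasure P)
    (pi : Y × T → ℝ≥0∞) (hpi1 : ∀ p, pi p ≤ 1)
    (hvalid : ∀ α : ℝ≥0∞, α ≤ 1 → (⨆ P ∈ C, P {p : Y × T | pi p ≤ α}) ≤ α) :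
    ∀ (A : Set T) (α : ℝ≥0∞), α ≤ 1 →
      (⨆ P ∈ C, P {p : Y × T | (⨆ t ∈ A, pi (p.1, t)) ≤ α ∧ p.2 ∈ A}) ≤ α := by
  intro A α hα
  refine le_trans ?_ (hvalid α hα)
  refine iSup₂_le fun P hP => le_trans (measure_mono ?_) (le_iSup₂ (f := fun P (_ : P ∈ C) => P {p : Y × T | pi p ≤ α}) P hP)
  intro p hp
  calc pi p = pi (p.1, p.2) := by rfl
    _ ≤ ⨆ t ∈ A, pi (p.1, t) := le_iSup₂ (f := fun t _ => pi (p.1, t)) p.2 hp.2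
    _ ≤ α := hp.1
end

section
/- Validity is preserved under the extension principle: if pi_y is a strongly valid contour for Theta, and phi : T -> S is any function, then the marginal contour pi_y^phi(s) = sup_{theta : phi(theta) = s} pi_y(theta) is strongly valid for phi(Theta), i.e., P-bar_{Y,Theta}{(y,theta) : pi_y^phi(phi(theta)) <= alpha} <= alpha for all alpha. -/
open MeasureTheory
open scoped ENNReal

/-- Validity is preserved under the extension principle: if `π` is a strongly valid contour for
`Θ` and `φ : T → S`, then the marginal contour `π^φ_y(s) = ⨆ θ ∈ {t | φ t = s}, π(y,θ)` is
strongly valid for `φ(Θ)`. -/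
theorem stmt12 {Y T S : Type*} [Fintype Y] [Fintype T] [Fintype S]
    [MeasurableSpace Y] [MeasurableSpace T]
    (C : Set (Measure (Y × T))) (hC : C.Nonempty)
    (hprob : ∀ P ∈ C, IsProbabilityMeasure P)
    (pi : Y × T → ℝ≥0∞) (phi : T → S)
    (hvalid : ∀ α : ℝ≥0∞, α ≤ 1 → (⨆ P ∈ C, P {p : Y × T | pi p ≤ α}) ≤ α) :
    ∀ α : ℝ≥0∞, α ≤ 1 →
      (⨆ P ∈ C,
        P {p : Y × T | (⨆ θ' ∈ {t : T | phi t = phi p.2}, pi (p.1, θ')) ≤ α}) ≤ α := by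
  intro α hα
  refine le_trans ?_ (hvalid α hα)
  refine iSup_mono fun P => iSup_mono fun _ => measure_mono fun p hp => ?_
  exact le_trans (le_iSup₂ (f := fun θ' (_ : θ' ∈ {t : T | phi t = phi p.2}) => pi (p.1, θ'))
    p.2 rfl) hp
end

section
/- Combination validity via Fisher's rule: if U and V are independent random variables each stochastically no smaller than Uniform(0,1) (P(U <= u) <= u and P(V <= v) <= v for all u,v in [0,1]), then K(U,V) = UV(1 - log(UV)) is also stochastically no smaller than Uniform(0,1): P(K(U,V) <= alpha) <= alpha for all alpha in [0,1]. -/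
open MeasureTheory
open scoped ENNReal

/-- Key measure-theoretic estimate: if two independent laws on `ℝ` both dominate the
uniform CDF, then the law of the product satisfies `P(XY ≤ t) ≤ t (1 - log t)`. -/
lemma fisher_key (ν ρ : Measure ℝ) [IsProbabilityMeasure ν] [IsProbabilityMeasure ρ]
    (hν : ∀ x : ℝ, 0 ≤ x → ν (Set.Iic x) ≤ ENNReal.ofReal x)
    (hρ : ∀ x : ℝ, 0 ≤ x → ρ (Set.Iic x) ≤ ENNReal.ofReal x)
    {t : ℝ} (ht0 : 0 < t) (ht1 : t < 1) :
    (ν.prod ρ) {p : ℝ × ℝ | p.1 * p.2 ≤ t} ≤ ENNReal.ofReal (t * (1 - Real.log t)) := by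
  have hmeas : MeasurableSet {p : ℝ × ℝ | p.1 * p.2 ≤ t} :=
    measurableSet_le (measurable_fst.mul measurable_snd) measurable_const
  rw [Measure.prod_apply hmeas]
  set F := ν (Set.Iic t) with hF
  set G := ν (Set.Ioi t) with hG
  set J := ∫⁻ s in Set.Ioo t 1, ν (Set.Ioo t (t / s)) with hJ
  -- Step 1 : split the integral at `u = t`
  have step1 : ∫⁻ u, ρ (Prod.mk u ⁻¹' {p : ℝ × ℝ | p.1 * p.2 ≤ t}) ∂ν
      ≤ F + ∫⁻ u in Set.Ioi t, ENNReal.ofReal (t / u) ∂ν := by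
    rw [← lintegral_add_compl (fun u => ρ (Prod.mk u ⁻¹' {p : ℝ × ℝ | p.1 * p.2 ≤ t}))
        (measurableSet_Iic (a := t)), Set.compl_Iic]
    refine add_le_add ?_ ?_
    · calc ∫⁻ u in Set.Iic t, ρ (Prod.mk u ⁻¹' {p : ℝ × ℝ | p.1 * p.2 ≤ t}) ∂ν
          ≤ ∫⁻ _ in Set.Iic t, 1 ∂ν := lintegral_mono fun u => prob_le_one
        _ = F := by rw [setLIntegral_one, hF]
    · refine setLIntegral_mono (by fun_prop) ?_
      intro u hu
      have hu' : t < u := hu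
      have hupos : 0 < u := ht0.trans hu'
      have : Prod.mk u ⁻¹' {p : ℝ × ℝ | p.1 * p.2 ≤ t} = Set.Iic (t / u) := by
        ext v
        simp [Set.mem_Iic, le_div_iff₀ hupos, mul_comm]
      rw [this]
      exact hρ _ (by positivity)
  -- Step 2 : layer-cake representation of `t/u` and Tonelli
  have step2 : ∫⁻ u in Set.Ioi t, ENNReal.ofReal (t / u) ∂ν
      ≤ ENNReal.ofReal t * G + J := by
    set W : Set (ℝ × ℝ) := {p : ℝ × ℝ | p.1 * p.2 < t} with hW
    have hWmeas : MeasurableSet W :=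
      measurableSet_lt (measurable_fst.mul measurable_snd) measurable_const
    have hWind : Measurable (W.indicator (1 : ℝ × ℝ → ℝ≥0∞)) :=
      measurable_one.indicator hWmeas
    have hpt : ∀ u ∈ Set.Ioi t, ENNReal.ofReal (t / u)
        ≤ ENNReal.ofReal t + ∫⁻ s in Set.Ioo t 1, W.indicator 1 (u, s) := by
      intro u hu
      have hu' : t < u := hu
      have hupos : 0 < u := ht0.trans hu'
      have hset : ∀ s : ℝ, W.indicator (1 : ℝ × ℝ → ℝ≥0∞) (u, s)
          = (Set.Iio (t/u)).indicator (1 : ℝ → ℝ≥0∞) s := by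
        intro s
        have : (u, s) ∈ W ↔ s ∈ Set.Iio (t/u) := by
          simp [hW, Set.mem_Iio, lt_div_iff₀ hupos, mul_comm]
        by_cases h : (u, s) ∈ W
        · rw [Set.indicator_of_mem h, Set.indicator_of_mem (this.mp h)]; rfl
        · rw [Set.indicator_of_notMem h, Set.indicator_of_notMem (fun hh => h (this.mpr hh))]
      have hvol : ∫⁻ s in Set.Ioo t 1, W.indicator 1 (u, s)
          = volume (Set.Iio (t/u) ∩ Set.Ioo t 1) := by
        simp_rw [hset]
        rw [lintegral_indicator_one measurableSet_Iio, Measure.restrict_apply measurableSet_Iio]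
      rw [hvol]
      rcases le_or_gt 1 u with h1 | h1
      · have : t / u ≤ t := by
          rw [div_le_iff₀ hupos]
          nlinarith
        exact le_add_right (ENNReal.ofReal_le_ofReal this)
      · have htu1 : t / u < 1 := by rw [div_lt_one hupos]; exact hu'
        have htu : t < t / u := by
          rw [lt_div_iff₀ hupos]; nlinarith
        have hseteq : Set.Iio (t/u) ∩ Set.Ioo t 1 = Set.Ioo t (t/u) := by
          ext s
          constructor
          · rintro ⟨h1', h2'⟩; exact ⟨h2'.1, h1'⟩
          · rintro ⟨h1', h2'⟩; exact ⟨h2', h1', h2'.trans htu1⟩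
        rw [hseteq, Real.volume_Ioo, ← ENNReal.ofReal_add ht0.le (by linarith)]
        apply le_of_eq
        congr 1
        ring
    calc ∫⁻ u in Set.Ioi t, ENNReal.ofReal (t / u) ∂ν
        ≤ ∫⁻ u in Set.Ioi t, (ENNReal.ofReal t + ∫⁻ s in Set.Ioo t 1, W.indicator 1 (u, s)) ∂ν := by
          refine setLIntegral_mono ?_ hpt
          refine Measurable.add (f := fun _ : ℝ => ENNReal.ofReal t)
            (g := fun u => ∫⁻ s in Set.Ioo t 1, W.indicator 1 (u, s)) measurable_const ?_
          exact hWind.lintegral_prod_right'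
      _ = ENNReal.ofReal t * G
          + ∫⁻ u in Set.Ioi t, ∫⁻ s in Set.Ioo t 1, W.indicator 1 (u, s) ∂volume ∂ν := by
          rw [lintegral_add_left measurable_const, setLIntegral_const, hG]
      _ = ENNReal.ofReal t * G
          + ∫⁻ s in Set.Ioo t 1, ∫⁻ u in Set.Ioi t, W.indicator 1 (u, s) ∂ν ∂volume := by
          congr 1
          exact lintegral_lintegral_swap (hWind.aemeasurable)
      _ = ENNReal.ofReal t * G + J := by
          rw [hJ]
          congr 1
          refine setLIntegral_congr_fun measurableSet_Ioo ?_
          intro s hs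
          have hs0 : 0 < s := ht0.trans hs.1
          have hset : ∀ u : ℝ, W.indicator (1 : ℝ × ℝ → ℝ≥0∞) (u, s)
              = (Set.Iio (t/s)).indicator (1 : ℝ → ℝ≥0∞) u := by
            intro u
            have : (u, s) ∈ W ↔ u ∈ Set.Iio (t/s) := by
              simp [hW, Set.mem_Iio, lt_div_iff₀ hs0]
            by_cases h : (u, s) ∈ W
            · rw [Set.indicator_of_mem h, Set.indicator_of_mem (this.mp h)]; rfl
            · rw [Set.indicator_of_notMem h, Set.indicator_of_notMem (fun hh => h (this.mpr hh))]
          simp_rw [hset]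
          rw [lintegral_indicator_one measurableSet_Iio, Measure.restrict_apply measurableSet_Iio]
          congr 1
          ext u
          simp only [Set.mem_inter_iff, Set.mem_Iio, Set.mem_Ioi, Set.mem_Ioo]
          tauto
  -- Step 3 : bound the double layer with cancellation of `F`
  have step3 : J + ENNReal.ofReal (1 - t) * F ≤ ENNReal.ofReal (-(t * Real.log t)) := by
    have hcomb : J + ENNReal.ofReal (1 - t) * F
        = ∫⁻ s in Set.Ioo t 1, (ν (Set.Ioo t (t / s)) + F) := by
      rw [hJ, lintegral_add_right _ measurable_const, setLIntegral_const, Real.volume_Ioo,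
        mul_comm]
    rw [hcomb]
    have hbd : ∫⁻ s in Set.Ioo t 1, (ν (Set.Ioo t (t / s)) + F)
        ≤ ∫⁻ s in Set.Ioo t 1, ENNReal.ofReal (t / s) := by
      refine setLIntegral_mono (by fun_prop) ?_
      intro s hs
      have hs0 : 0 < s := ht0.trans hs.1
      have hts : t < t / s := by
        rw [lt_div_iff₀ hs0]; nlinarith [hs.2]
      have hdisj : Disjoint (Set.Ioo t (t / s)) (Set.Iic t) := by
        apply Set.disjoint_left.mpr
        rintro x ⟨hx1, _⟩ hx2
        exact absurd hx2 (not_le.mpr hx1)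
      calc ν (Set.Ioo t (t / s)) + F
          = ν (Set.Ioo t (t / s) ∪ Set.Iic t) := by
            rw [hF, measure_union hdisj measurableSet_Iic]
        _ ≤ ν (Set.Iic (t / s)) := by
            apply measure_mono
            rintro x (hx | hx)
            · exact hx.2.le
            · exact le_trans (Set.mem_Iic.mp hx) hts.le
        _ ≤ ENNReal.ofReal (t / s) := hν _ (by positivity)
    refine hbd.trans (le_of_eq ?_)
    have hcont : ContinuousOn (fun s : ℝ => t / s) (Set.Icc t 1) :=
      continuousOn_const.div continuousOn_id (fun x hx => ne_of_gt (lt_of_lt_of_le ht0 hx.1))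
    have hint : IntegrableOn (fun s : ℝ => t / s) (Set.Ioo t 1) :=
      (hcont.integrableOn_Icc).mono_set Set.Ioo_subset_Icc_self
    rw [← ofReal_integral_eq_lintegral_ofReal hint
      ((ae_restrict_iff' measurableSet_Ioo).mpr (ae_of_all _ fun s hs => by
        have : 0 < s := ht0.trans hs.1
        positivity))]
    congr 1
    rw [← integral_Ioc_eq_integral_Ioo, ← intervalIntegral.integral_of_le ht1.le]
    simp_rw [div_eq_mul_inv]
    rw [intervalIntegral.integral_const_mul, integral_inv (by
      rw [Set.uIcc_of_le ht1.le]
      rintro ⟨h1, _⟩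
      exact absurd h1 (not_le.mpr ht0))]
    rw [Real.log_div one_ne_zero (ne_of_gt ht0), Real.log_one]
    ring
  -- Assemble everything
  set c := ENNReal.ofReal (1 - t) * F with hc
  have hcfin : c ≠ ⊤ := ENNReal.mul_ne_top ENNReal.ofReal_ne_top (measure_ne_top ν _)
  have hFG : F + G = 1 := by
    rw [hF, hG, ← Set.compl_Iic, measure_add_measure_compl measurableSet_Iic, measure_univ]
  have hid : F + ENNReal.ofReal t * G = c + ENNReal.ofReal t := by
    have h1 : ENNReal.ofReal (1 - t) + ENNReal.ofReal t = 1 := by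
      rw [← ENNReal.ofReal_add (by linarith) ht0.le]
      norm_num
    calc F + ENNReal.ofReal t * G
        = (ENNReal.ofReal (1 - t) + ENNReal.ofReal t) * F + ENNReal.ofReal t * G := by
          rw [h1, one_mul]
      _ = c + ENNReal.ofReal t * (F + G) := by rw [hc]; ring
      _ = c + ENNReal.ofReal t := by rw [hFG, mul_one]
  have hsplit : ENNReal.ofReal (t * (1 - Real.log t))
      = ENNReal.ofReal t + ENNReal.ofReal (-(t * Real.log t)) := by
    have hlog : Real.log t ≤ 0 := Real.log_nonpos ht0.le ht1.le
    rw [← ENNReal.ofReal_add ht0.le (by nlinarith)]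
    congr 1
    ring
  have hmain : (∫⁻ u, ρ (Prod.mk u ⁻¹' {p : ℝ × ℝ | p.1 * p.2 ≤ t}) ∂ν) + c
      ≤ ENNReal.ofReal (t * (1 - Real.log t)) + c := by
    calc (∫⁻ u, ρ (Prod.mk u ⁻¹' {p : ℝ × ℝ | p.1 * p.2 ≤ t}) ∂ν) + c
        ≤ (F + (ENNReal.ofReal t * G + J)) + c :=
          add_le_add_left (step1.trans (add_le_add_right step2 F)) c
      _ = (F + ENNReal.ofReal t * G) + (J + c) := by ring
      _ ≤ (F + ENNReal.ofReal t * G) + ENNReal.ofReal (-(t * Real.log t)) :=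
          add_le_add_right step3 _
      _ = (c + ENNReal.ofReal t) + ENNReal.ofReal (-(t * Real.log t)) := by rw [hid]
      _ = ENNReal.ofReal (t * (1 - Real.log t)) + c := by rw [hsplit]; ring
  exact (ENNReal.add_le_add_iff_right hcfin).mp hmain

/-- Combination validity via Fisher's rule: if `U` and `V` are independent `[0,1]`-valued random
variables, each stochastically no smaller than `Uniform(0,1)`, then
`K(U,V) = U V (1 - log (U V))` is also stochastically no smaller than `Uniform(0,1)`. -/
theorem stmt19 {Ω : Type*} [MeasurableSpace Ω] (μ : Measure Ω) [IsProbabilityMeasure μ]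
    (U V : Ω → ℝ) (hU : Measurable U) (hV : Measurable V)
    (hUrange : ∀ ω, U ω ∈ Set.Icc (0:ℝ) 1) (hVrange : ∀ ω, V ω ∈ Set.Icc (0:ℝ) 1)
    (hindep : ProbabilityTheory.IndepFun U V μ)
    (hUdom : ∀ u ∈ Set.Icc (0:ℝ) 1, μ {ω | U ω ≤ u} ≤ ENNReal.ofReal u)
    (hVdom : ∀ v ∈ Set.Icc (0:ℝ) 1, μ {ω | V ω ≤ v} ≤ ENNReal.ofReal v) :
    ∀ α ∈ Set.Icc (0:ℝ) 1,
      μ {ω | U ω * V ω * (1 - Real.log (U ω * V ω)) ≤ α} ≤ ENNReal.ofReal α := by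
  intro α hα
  set g : ℝ → ℝ := fun x => x * (1 - Real.log x) with hg
  have hgcont : Continuous g := by
    have : g = fun x => x - x * Real.log x := by funext x; rw [hg]; ring
    rw [this]
    exact continuous_id.sub Real.continuous_mul_log
  have hg0 : g 0 = 0 := by simp [hg]
  have hg1 : g 1 = 1 := by simp [hg]
  have hgmono : StrictMonoOn g (Set.Icc 0 1) := by
    apply strictMonoOn_of_deriv_pos (convex_Icc 0 1) hgcont.continuousOn
    intro x hx
    rw [interior_Icc] at hx
    have hd : HasDerivAt g (-Real.log x) x := by
      have h1 : HasDerivAt (fun y : ℝ => y) 1 x := hasDerivAt_id x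
      have h2 : HasDerivAt (fun y : ℝ => 1 - Real.log y) (-x⁻¹) x :=
        (Real.hasDerivAt_log (ne_of_gt hx.1)).const_sub 1
      have hx0 : (x:ℝ) ≠ 0 := ne_of_gt hx.1
      have this : HasDerivAt (fun y : ℝ => y * (1 - Real.log y))
        (1 * (1 - Real.log x) + x * -x⁻¹) x := h1.mul h2
      convert this using 1
      rw [mul_neg, mul_inv_cancel₀ hx0]
      ring
    rw [hd.deriv]
    exact neg_pos.mpr (Real.log_neg hx.1 hx.2)
  -- find t with g t = α
  obtain ⟨t, ht, hgt⟩ : ∃ t ∈ Set.Icc (0:ℝ) 1, g t = α := by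
    have := intermediate_value_Icc (zero_le_one (α := ℝ)) hgcont.continuousOn
    rw [hg0, hg1] at this
    exact this hα
  -- event inclusion
  have hUV : ∀ ω, U ω * V ω ∈ Set.Icc (0:ℝ) 1 := fun ω =>
    ⟨mul_nonneg (hUrange ω).1 (hVrange ω).1,
     mul_le_one₀ (hUrange ω).2 (hVrange ω).1 (hVrange ω).2⟩
  have hincl : {ω | U ω * V ω * (1 - Real.log (U ω * V ω)) ≤ α} ⊆ {ω | U ω * V ω ≤ t} := by
    intro ω hω
    by_contra h
    simp only [Set.mem_setOf_eq, not_le] at h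
    have : g t < g (U ω * V ω) := hgmono ht (hUV ω) h
    rw [hgt] at this
    exact absurd hω (not_le.mpr this)
  refine le_trans (measure_mono hincl) ?_
  rcases eq_or_lt_of_le ht.1 with h0 | h0
  · -- t = 0, so α = 0
    have hα0 : α = 0 := by rw [← hgt, ← h0, hg0]
    have hsub : {ω | U ω * V ω ≤ t} ⊆ {ω | U ω ≤ 0} ∪ {ω | V ω ≤ 0} := by
      intro ω hω
      by_contra h
      simp only [Set.mem_union, Set.mem_setOf_eq, not_or, not_le] at h
      have : 0 < U ω * V ω := mul_pos h.1 h.2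
      rw [← h0] at hω
      exact absurd hω (not_le.mpr this)
    calc μ {ω | U ω * V ω ≤ t} ≤ μ {ω | U ω ≤ 0} + μ {ω | V ω ≤ 0} :=
          le_trans (measure_mono hsub) (measure_union_le _ _)
      _ ≤ ENNReal.ofReal 0 + ENNReal.ofReal 0 :=
          add_le_add (hUdom 0 ⟨le_refl _, zero_le_one⟩) (hVdom 0 ⟨le_refl _, zero_le_one⟩)
      _ = ENNReal.ofReal α := by simp [hα0]
  rcases eq_or_lt_of_le ht.2 with h1 | h1
  · -- t = 1, so α = 1
    have hα1 : α = 1 := by rw [← hgt, h1, hg1]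
    calc μ {ω | U ω * V ω ≤ t} ≤ 1 := prob_le_one
      _ = ENNReal.ofReal α := by simp [hα1]
  -- main case 0 < t < 1
  have hνprob : IsProbabilityMeasure (μ.map U) := Measure.isProbabilityMeasure_map hU.aemeasurable
  have hρprob : IsProbabilityMeasure (μ.map V) := Measure.isProbabilityMeasure_map hV.aemeasurable
  have hcdf : ∀ (W : Ω → ℝ), Measurable W →
      (∀ u ∈ Set.Icc (0:ℝ) 1, μ {ω | W ω ≤ u} ≤ ENNReal.ofReal u) →
      ∀ x : ℝ, 0 ≤ x → (μ.map W) (Set.Iic x) ≤ ENNReal.ofReal x := by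
    intro W hW hWdom x hx
    rw [Measure.map_apply hW measurableSet_Iic]
    rcases le_or_gt x 1 with hx1 | hx1
    · exact hWdom x ⟨hx, hx1⟩
    · exact le_trans prob_le_one (ENNReal.one_le_ofReal.mpr hx1.le)
  have hmap : μ.map (fun ω => (U ω, V ω)) = (μ.map U).prod (μ.map V) :=
    (ProbabilityTheory.indepFun_iff_map_prod_eq_prod_map_map hU.aemeasurable
      hV.aemeasurable).mp hindep
  have hmeasS : MeasurableSet {p : ℝ × ℝ | p.1 * p.2 ≤ t} :=
    measurableSet_le (measurable_fst.mul measurable_snd) measurable_const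
  have heq : μ {ω | U ω * V ω ≤ t}
      = ((μ.map U).prod (μ.map V)) {p : ℝ × ℝ | p.1 * p.2 ≤ t} := by
    rw [← hmap, Measure.map_apply (hU.prodMk hV) hmeasS]
    rfl
  rw [heq, ← hgt]
  exact fisher_key (μ.map U) (μ.map V) (hcdf U hU hUdom) (hcdf V hV hVdom) h0 h1
end
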